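/- For every ideal I ⊆ R = ℂ[x_1,…,x_N], every subset A ⊆ {x_1,…,x_N} and every d ∈ ℕ, the eliminating truncated dual space satisfies E_0^d[I, A] = D_0[I + ⟨A⟩^{d+1}], where ⟨A⟩ ⊆ R is the ideal generated by the variables in A. -/

import Mathlib

open MvPolynomial

noncomputable section

/-- The polynomial ring `R = ℂ[x_1,…,x_N]`, with variables indexed by `Fin N`. -/
abbrev PolyR (N : ℕ) := MvPolynomial (Fin N) ℂ

/-- A dual functional `q = Σ_α c_α ∂^α` is encoded by its coefficient vector, i.e.
by an element of `MvPolynomial (Fin N) ℂ` (which is exactly the space of finitely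
supported functions `ℕ^N →₀ ℂ`).  Its application to a polynomial `f` is
`q(f) = Σ_α c_α · (coefficient of x^α in f)`. -/
def dapply {N : ℕ} (q f : PolyR N) : ℂ := ∑ α ∈ f.support, q.coeff α * f.coeff α

/-- The Macaulay dual space `D_0[I]` of an ideal `I`, as a `ℂ`-subspace of `D_0`. -/
def dualSpace {N : ℕ} (I : Ideal (PolyR N)) : Submodule ℂ (PolyR N) where
  carrier := {q | ∀ f ∈ I, dapply q f = 0}
  zero_mem' := by intro f _; simp [dapply]
  add_mem' := by
    intro a b ha hb f hf
    have h : dapply (a + b) f = dapply a f + dapply b f := by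
      simp [dapply, MvPolynomial.coeff_add, add_mul, Finset.sum_add_distrib]
    rw [h, ha f hf, hb f hf, add_zero]
  smul_mem' := by
    intro c q hq f hf
    have h : dapply (c • q) f = c * dapply q f := by
      simp [dapply, MvPolynomial.coeff_smul, Finset.mul_sum, mul_assoc]
    rw [h, hq f hf, mul_zero]

/-- The subspace of dual functionals all of whose exponents satisfy `P`. -/
def expSupported {N : ℕ} (P : (Fin N →₀ ℕ) → Prop) : Submodule ℂ (PolyR N) where
  carrier := {q | ∀ α ∈ q.support, P α}
  zero_mem' := by simp
  add_mem' := by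
    intro a b ha hb α hα
    rcases Finset.mem_union.mp (MvPolynomial.support_add hα) with h | h
    · exact ha α h
    · exact hb α h
  smul_mem' := by
    intro c q hq α hα
    exact hq α (MvPolynomial.support_smul hα)

/-- The truncated dual space `D_0^k[I]`: functionals in `D_0[I]` of order at most `k`
(in particular `0` belongs to it). -/
def truncDual {N : ℕ} (I : Ideal (PolyR N)) (k : ℕ) : Submodule ℂ (PolyR N) :=
  dualSpace I ⊓ expSupported (fun α => ∑ i, α i ≤ k)

/-- The eliminating truncated dual space `E_0^d[I, A]`, where the set of variables `A`
is given by a finite set of indices: functionals in `D_0[I]` with `ord_A ≤ d`. -/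
def elimDual {N : ℕ} (I : Ideal (PolyR N)) (A : Finset (Fin N)) (d : ℕ) :
    Submodule ℂ (PolyR N) :=
  dualSpace I ⊓ expSupported (fun α => ∑ i ∈ A, α i ≤ d)

open scoped Classical in
/-- The action `g · q` of the polynomial ring on dual functionals, determined by
`(g·q)(f) = q(g·f)`; concretely `g · ∂^α = Σ_{γ ≤ α} g_γ ∂^{α-γ}`. -/
def dmul {N : ℕ} (g q : PolyR N) : PolyR N :=
  ∑ γ ∈ g.support, ∑ α ∈ q.support,
    if γ ≤ α then (MvPolynomial.monomial (α - γ)) (g.coeff γ * q.coeff α) else 0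

/-- The maximal ideal `m = ⟨x_1,…,x_N⟩` of the origin. -/
def mIdeal (N : ℕ) : Ideal (PolyR N) := Ideal.span (Set.range MvPolynomial.X)

/-- The multiplicative set of polynomials not vanishing at the origin. -/
def atOrigin (N : ℕ) : Submonoid (PolyR N) where
  carrier := {g | MvPolynomial.constantCoeff g ≠ 0}
  one_mem' := by simp
  mul_mem' := by
    intro a b ha hb
    simp only [Set.mem_setOf_eq, map_mul]
    exact mul_ne_zero ha hb

/-- The local ring `R_0` of the origin: the localization of `R` at the maximal ideal
of the origin. -/
abbrev LocR (N : ℕ) := Localization (atOrigin N)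

/-- The extension `I·R_0` of an ideal `I ⊆ R` to the local ring of the origin. -/
def extIdeal {N : ℕ} (I : Ideal (PolyR N)) : Ideal (LocR N) :=
  Ideal.map (algebraMap (PolyR N) (LocR N)) I

/-- The contraction `I·R_0 ∩ R` of the extension of `I` back to `R`. -/
def contExt {N : ℕ} (I : Ideal (PolyR N)) : Ideal (PolyR N) :=
  Ideal.comap (algebraMap (PolyR N) (LocR N)) (extIdeal I)

/-- The local Hilbert function
`H_I(k) = dim_ℂ R/(I + m^{k+1}) − dim_ℂ R/(I + m^k)`
(note that for `k = 0` the subtrahend vanishes since `m^0 = R`). -/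
def hilb {N : ℕ} (I : Ideal (PolyR N)) (k : ℕ) : ℕ :=
  Module.finrank ℂ (PolyR N ⧸ (I + mIdeal N ^ (k + 1)))
    - Module.finrank ℂ (PolyR N ⧸ (I + mIdeal N ^ k))

lemma dapply_eq_q {N : ℕ} (q f : PolyR N) :
    dapply q f = ∑ α ∈ q.support, q.coeff α * f.coeff α := by
  rw [dapply]
  rw [Finset.sum_subset (Finset.subset_union_right (s₁ := q.support) (s₂ := f.support))
    (by intro x _ hx; rw [MvPolynomial.notMem_support_iff.mp hx, mul_zero])]
  rw [Finset.sum_subset (Finset.subset_union_left (s₁ := q.support) (s₂ := f.support))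
    (by intro x _ hx; rw [MvPolynomial.notMem_support_iff.mp hx, zero_mul])]

lemma dapply_add_right {N : ℕ} (q f g : PolyR N) :
    dapply q (f + g) = dapply q f + dapply q g := by
  simp [dapply_eq_q, MvPolynomial.coeff_add, mul_add, Finset.sum_add_distrib]

lemma dapply_monomial {N : ℕ} (q : PolyR N) (α : Fin N →₀ ℕ) :
    dapply q (monomial α 1) = q.coeff α := by
  rw [dapply, MvPolynomial.support_monomial]
  simp

variable {N : ℕ}

/-- abbreviation for the ideal generated by the variables in `A` -/
def JId (A : Finset (Fin N)) : Ideal (PolyR N) :=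
  Ideal.span ((fun i => (MvPolynomial.X i : PolyR N)) '' (A : Set (Fin N)))

lemma sumA_add (A : Finset (Fin N)) (β δ : Fin N →₀ ℕ) :
    ∑ i ∈ A, (β + δ) i = (∑ i ∈ A, β i) + ∑ i ∈ A, δ i := by
  simp [Finsupp.add_apply, Finset.sum_add_distrib]

lemma coeff_zero_of_mem_J {A : Finset (Fin N)} {f : PolyR N}
    (hf : f ∈ JId A) {γ : Fin N →₀ ℕ} (hγ : ∑ i ∈ A, γ i = 0) :
    f.coeff γ = 0 := by
  induction hf using Submodule.span_induction generalizing γ with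
  | mem x hx =>
    obtain ⟨i, hi, rfl⟩ := hx
    rw [MvPolynomial.coeff_X']
    split
    · next h =>
      subst h
      rw [Finset.sum_eq_zero_iff] at hγ
      have := hγ i hi
      simp at this
    · rfl
  | zero => simp
  | add x y hx hy ihx ihy => simp [MvPolynomial.coeff_add, ihx hγ, ihy hγ]
  | smul a x hx ih =>
    rw [smul_eq_mul, MvPolynomial.coeff_mul]
    apply Finset.sum_eq_zero
    rintro ⟨β, δ⟩ hm
    rw [Finset.HasAntidiagonal.mem_antidiagonal] at hm
    have hδ : ∑ i ∈ A, δ i = 0 := by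
      have := sumA_add A β δ
      rw [hm] at this
      omega
    rw [ih hδ, mul_zero]

lemma coeff_zero_of_mem_J_pow {A : Finset (Fin N)} (k : ℕ) {f : PolyR N}
    (hf : f ∈ (JId A) ^ k) {γ : Fin N →₀ ℕ} (hγ : ∑ i ∈ A, γ i < k) :
    f.coeff γ = 0 := by
  induction k generalizing f γ with
  | zero => exact absurd hγ (Nat.not_lt_zero _)
  | succ k ih =>
    rw [pow_succ] at hf
    have key : ∀ γ : Fin N →₀ ℕ, ∑ i ∈ A, γ i < k + 1 → f.coeff γ = 0 := by
      refine Submodule.mul_induction_on hf ?_ ?_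
      · intro m hm n hn γ hγ
        rw [MvPolynomial.coeff_mul]
        apply Finset.sum_eq_zero
        rintro ⟨β, δ⟩ hmem
        rw [Finset.HasAntidiagonal.mem_antidiagonal] at hmem
        have hsum : (∑ i ∈ A, β i) + ∑ i ∈ A, δ i = ∑ i ∈ A, γ i := by
          rw [← sumA_add, hmem]
        by_cases hb : ∑ i ∈ A, β i < k
        · rw [ih hm hb, zero_mul]
        · have hδ : ∑ i ∈ A, δ i = 0 := by omega
          rw [coeff_zero_of_mem_J hn hδ, mul_zero]
      · intro x y ihx ihy γ hγ
        simp [MvPolynomial.coeff_add, ihx γ hγ, ihy γ hγ]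
    exact key γ hγ

lemma monomial_mem_J_pow {A : Finset (Fin N)} (k : ℕ) (α : Fin N →₀ ℕ)
    (h : k ≤ ∑ i ∈ A, α i) : (MvPolynomial.monomial α (1:ℂ) : PolyR N) ∈ (JId A) ^ k := by
  induction k generalizing α with
  | zero => simp [Ideal.one_eq_top]
  | succ k ih =>
    have hpos : 0 < ∑ i ∈ A, α i := lt_of_lt_of_le (Nat.succ_pos k) h
    obtain ⟨i, hiA, hi⟩ : ∃ i ∈ A, 0 < α i := by
      by_contra hc
      push_neg at hc
      rw [Finset.sum_eq_zero (fun i hiA => Nat.le_zero.mp (hc i hiA))] at hpos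
      exact absurd hpos (lt_irrefl 0)
    set β := α - Finsupp.single i 1 with hβ
    have hle : Finsupp.single i 1 ≤ α := by
      rw [Finsupp.single_le_iff]
      exact hi
    have hαβ : Finsupp.single i 1 + β = α := add_tsub_cancel_of_le hle
    have hXi : (MvPolynomial.X i : PolyR N) ∈ JId A := Ideal.subset_span ⟨i, hiA, rfl⟩
    have h1 : ∑ j ∈ A, (Finsupp.single i 1 : Fin N →₀ ℕ) j = 1 := by
      rw [Finset.sum_eq_single_of_mem i hiA
        (fun j _ hne => Finsupp.single_eq_of_ne' (Ne.symm hne))]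
      simp
    have hsum : k ≤ ∑ j ∈ A, β j := by
      have h2 := sumA_add A (Finsupp.single i 1) β
      rw [hαβ] at h2
      omega
    have heq : (MvPolynomial.monomial α (1:ℂ) : PolyR N)
        = MvPolynomial.X i * MvPolynomial.monomial β 1 := by
      rw [MvPolynomial.X, MvPolynomial.monomial_mul, one_mul, hαβ]
    rw [heq, pow_succ']
    exact Ideal.mul_mem_mul hXi (ih β hsum)

/-- For every ideal `I ⊆ R`, subset `A` of the variables and `d ∈ ℕ`,
`E_0^d[I, A] = D_0[I + ⟨A⟩^{d+1}]`. -/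
theorem statement14 {N : ℕ} (hN : 1 ≤ N) (I : Ideal (PolyR N))
    (A : Finset (Fin N)) (d : ℕ) :
    elimDual I A d
      = dualSpace (I + (Ideal.span ((fun i => (MvPolynomial.X i : PolyR N)) ''
          (A : Set (Fin N)))) ^ (d + 1)) := by
  apply le_antisymm
  · rintro q hq f hf
    obtain ⟨hqI, hqP⟩ := Submodule.mem_inf.mp hq
    rw [Submodule.add_eq_sup, Submodule.mem_sup] at hf
    obtain ⟨g, hg, h, hh, rfl⟩ := hf
    rw [dapply_add_right, hqI g hg, zero_add]
    rw [dapply_eq_q]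
    apply Finset.sum_eq_zero
    intro α hα
    rw [coeff_zero_of_mem_J_pow (d + 1) hh (Nat.lt_succ_of_le (hqP α hα)), mul_zero]
  · intro q hq
    rw [elimDual, Submodule.mem_inf]
    constructor
    · intro f hf
      exact hq f (Submodule.mem_sup_left hf)
    · intro α hα
      by_contra hc
      push_neg at hc
      have hm : (MvPolynomial.monomial α (1:ℂ) : PolyR N)
          ∈ I + (Ideal.span ((fun i => (MvPolynomial.X i : PolyR N)) ''
            (A : Set (Fin N)))) ^ (d + 1) :=
        Submodule.mem_sup_right (monomial_mem_J_pow (d + 1) α hc)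
      have h0 := hq _ hm
      rw [dapply_monomial] at h0
      exact MvPolynomial.mem_support_iff.mp hα h0
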